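/- Let I ⊆ ℝ be a nonempty open interval and suppose (F,f1,f2,G,g1,g2) solves equation (1), where each of F, f1, f2, g1, g2 : I → ℝ and G : g1(I)+g2(I) → ℝ is differentiable and g1'(x) ≠ 0 and g2'(x) ≠ 0 for all x ∈ I. Define φ := F'/2, ψ_k := 1/g1' + (-1)^k / g2' and Ψ_k := -f1'/g1' + (-1)^{k-1} f2'/g2' for k ∈ {1,2}. Then for all x,y ∈ I one has φ((x+y)/2)·(ψ1(x) + ψ1(y)) = Ψ1(x) + Ψ1(y) and φ((x+y)/2)·(ψ2(x) − ψ2(y)) = Ψ2(x) − Ψ2(y). -/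

import Mathlib

open Set

/-- Equation (1): `F((x+y)/2) + f1(x) + f2(y) = G(g1(x) + g2(y))` for all `x, y ∈ I`. -/
def SolvesEq1 (I : Set ℝ) (F f1 f2 G g1 g2 : ℝ → ℝ) : Prop :=
  ∀ x ∈ I, ∀ y ∈ I, F ((x + y) / 2) + f1 x + f2 y = G (g1 x + g2 y)

/-- If `(F,f1,f2,G,g1,g2)` is a differentiable solution of equation (1)
with `g1' , g2'` nonvanishing on `I`, then the system of functional equations
`φ((x+y)/2)(ψ₁(x)+ψ₁(y)) = Ψ₁(x)+Ψ₁(y)` and `φ((x+y)/2)(ψ₂(x)−ψ₂(y)) = Ψ₂(x)−Ψ₂(y)` holds,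
where `φ = F'/2`, `ψ_k = 1/g1' + (-1)^k/g2'`, `Ψ_k = -f1'/g1' + (-1)^{k-1} f2'/g2'`. -/
theorem stmt1
    (I : Set ℝ) (hIo : IsOpen I) (hIc : I.OrdConnected) (hIne : I.Nonempty)
    (F f1 f2 G g1 g2 F' f1' f2' g1' g2' G' : ℝ → ℝ)
    (hsol : SolvesEq1 I F f1 f2 G g1 g2)
    (hF : ∀ x ∈ I, HasDerivAt F (F' x) x)
    (hf1 : ∀ x ∈ I, HasDerivAt f1 (f1' x) x)
    (hf2 : ∀ x ∈ I, HasDerivAt f2 (f2' x) x)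
    (hg1 : ∀ x ∈ I, HasDerivAt g1 (g1' x) x)
    (hg2 : ∀ x ∈ I, HasDerivAt g2 (g2' x) x)
    (hG : ∀ u ∈ {u : ℝ | ∃ x ∈ I, ∃ y ∈ I, u = g1 x + g2 y},
      HasDerivWithinAt G (G' u) {u : ℝ | ∃ x ∈ I, ∃ y ∈ I, u = g1 x + g2 y} u)
    (hg1' : ∀ x ∈ I, g1' x ≠ 0) (hg2' : ∀ x ∈ I, g2' x ≠ 0) :
    ∀ x ∈ I, ∀ y ∈ I,
      (F' ((x + y) / 2) / 2) *
          ((1 / g1' x - 1 / g2' x) + (1 / g1' y - 1 / g2' y)) =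
        (-(f1' x / g1' x) + f2' x / g2' x) + (-(f1' y / g1' y) + f2' y / g2' y) ∧
      (F' ((x + y) / 2) / 2) *
          ((1 / g1' x + 1 / g2' x) - (1 / g1' y + 1 / g2' y)) =
        (-(f1' x / g1' x) - f2' x / g2' x) - (-(f1' y / g1' y) - f2' y / g2' y) := by
  set S := {u : ℝ | ∃ x ∈ I, ∃ y ∈ I, u = g1 x + g2 y} with hS
  have hmid : ∀ x ∈ I, ∀ y ∈ I, (x + y) / 2 ∈ I := by
    intro x hx y hy
    rcases le_total x y with h | h
    · exact hIc.out hx hy ⟨by linarith, by linarith⟩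
    · exact hIc.out hy hx ⟨by linarith, by linarith⟩
  -- partial derivative in x
  have hDx : ∀ x ∈ I, ∀ y ∈ I,
      F' ((x + y) / 2) / 2 + f1' x = G' (g1 x + g2 y) * g1' x := by
    intro x hx y hy
    have hm := hmid x hx y hy
    have hu : g1 x + g2 y ∈ S := ⟨x, hx, y, hy, rfl⟩
    have h2 : HasDerivAt (fun t : ℝ => (t + y) / 2) (1 / 2) x := by
      simpa using ((hasDerivAt_id x).add_const y).div_const 2
    have hL : HasDerivAt (fun t => F ((t + y) / 2) + f1 t + f2 y)
        (F' ((x + y) / 2) * (1 / 2) + f1' x) x := by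
      exact (((hF _ hm).comp x h2).add (hf1 x hx)).add_const (f2 y)
    have hinner : HasDerivWithinAt (fun t => g1 t + g2 y) (g1' x) I x :=
      ((hg1 x hx).add_const (g2 y)).hasDerivWithinAt
    have hmaps : Set.MapsTo (fun t => g1 t + g2 y) I S := fun t ht => ⟨t, ht, y, hy, rfl⟩
    have hR : HasDerivAt (fun t => G (g1 t + g2 y)) (G' (g1 x + g2 y) * g1' x) x := by
      exact ((hG _ hu).comp x hinner hmaps).hasDerivAt (hIo.mem_nhds hx)
    have heq : (fun t => F ((t + y) / 2) + f1 t + f2 y) =ᶠ[nhds x]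
        (fun t => G (g1 t + g2 y)) := by
      filter_upwards [hIo.mem_nhds hx] with t ht
      exact hsol t ht y hy
    have := (hR.congr_of_eventuallyEq heq).unique hL
    linarith [this]
  -- partial derivative in y
  have hDy : ∀ x ∈ I, ∀ y ∈ I,
      F' ((x + y) / 2) / 2 + f2' y = G' (g1 x + g2 y) * g2' y := by
    intro x hx y hy
    have hm := hmid x hx y hy
    have hu : g1 x + g2 y ∈ S := ⟨x, hx, y, hy, rfl⟩
    have h2 : HasDerivAt (fun t : ℝ => (x + t) / 2) (1 / 2) x ∨ True := Or.inr trivial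
    have h2' : HasDerivAt (fun t : ℝ => (x + t) / 2) (1 / 2) y := by
      simpa using ((hasDerivAt_id y).const_add x).div_const 2
    have hL : HasDerivAt (fun t => F ((x + t) / 2) + f1 x + f2 t)
        (F' ((x + y) / 2) * (1 / 2) + f2' y) y :=
      (((hF _ hm).comp y h2').add_const (f1 x)).add (hf2 y hy)
    have hinner : HasDerivWithinAt (fun t => g1 x + g2 t) (g2' y) I y :=
      ((hg2 y hy).const_add (g1 x)).hasDerivWithinAt
    have hmaps : Set.MapsTo (fun t => g1 x + g2 t) I S := fun t ht => ⟨x, hx, t, ht, rfl⟩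
    have hR : HasDerivAt (fun t => G (g1 x + g2 t)) (G' (g1 x + g2 y) * g2' y) y := by
      exact ((hG _ hu).comp y hinner hmaps).hasDerivAt (hIo.mem_nhds hy)
    have heq : (fun t => F ((x + t) / 2) + f1 x + f2 t) =ᶠ[nhds y]
        (fun t => G (g1 x + g2 t)) := by
      filter_upwards [hIo.mem_nhds hy] with t ht
      exact hsol x hx t ht
    have := (hR.congr_of_eventuallyEq heq).unique hL
    linarith [this]
  -- key cross relation
  have key : ∀ x ∈ I, ∀ y ∈ I,
      (F' ((x + y) / 2) / 2 + f1' x) * g2' y = (F' ((x + y) / 2) / 2 + f2' y) * g1' x := by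
    intro x hx y hy
    rw [hDx x hx y hy, hDy x hx y hy]; ring
  intro x hx y hy
  have k1 := key x hx y hy
  have k2 := key y hy x hx
  rw [show (y + x) / 2 = (x + y) / 2 by ring] at k2
  have h1x := hg1' x hx
  have h2x := hg2' x hx
  have h1y := hg1' y hy
  have h2y := hg2' y hy
  have q1 : F' ((x + y) / 2) / 2 / g1' x + f1' x / g1' x
      = F' ((x + y) / 2) / 2 / g2' y + f2' y / g2' y := by
    field_simp
    linear_combination 2 * k1
  have q2 : F' ((x + y) / 2) / 2 / g1' y + f1' y / g1' y
      = F' ((x + y) / 2) / 2 / g2' x + f2' x / g2' x := by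
    field_simp
    linear_combination 2 * k2
  constructor
  · linear_combination q1 + q2
  · linear_combination q1 - q2
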